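/- Let A be an integral domain finitely generated over a field K of characteristic zero, f ∈ A nonzero, and ∂ a locally nilpotent derivation of the localization A_f. Then there exists N ∈ ℕ such that the derivation f^N ∂ maps A into A and restricts to a locally nilpotent derivation of A. -/

import Mathlib

/-- Iterated Leibniz rule for a derivation. -/
lemma iter_leibniz {K B : Type*} [CommRing K] [CommRing B] [Algebra K B]
    (D : Derivation K B B) (x y : B) (n : ℕ) :
    (⇑D)^[n] (x * y)
      = ∑ k ∈ Finset.range (n + 1), n.choose k • ((⇑D)^[k] x * (⇑D)^[n - k] y) := by
  induction n with
  | zero => simp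
  | succ n ih =>
    rw [Function.iterate_succ_apply', ih, map_sum]
    have step : ∀ k, D (n.choose k • ((⇑D)^[k] x * (⇑D)^[n - k] y)) =
        n.choose k • ((⇑D)^[k + 1] x * (⇑D)^[n - k] y) +
          n.choose k • ((⇑D)^[k] x * (⇑D)^[n - k + 1] y) := by
      intro k
      rw [map_nsmul, Derivation.leibniz, smul_eq_mul, smul_eq_mul, smul_add,
        Function.iterate_succ_apply', Function.iterate_succ_apply']
      ring_nf
    calc (∑ k ∈ Finset.range (n + 1), D (n.choose k • ((⇑D)^[k] x * (⇑D)^[n - k] y)))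
        = (∑ k ∈ Finset.range (n + 1), n.choose k • ((⇑D)^[k + 1] x * (⇑D)^[n - k] y))
            + ∑ k ∈ Finset.range (n + 1), n.choose k • ((⇑D)^[k] x * (⇑D)^[n - k + 1] y) := by
          rw [← Finset.sum_add_distrib]
          exact Finset.sum_congr rfl fun k _ => step k
      _ = ∑ k ∈ Finset.range (n + 1 + 1), (n + 1).choose k • ((⇑D)^[k] x * (⇑D)^[n + 1 - k] y) := by
          rw [Finset.sum_range_succ' (fun k => (n + 1).choose k • ((⇑D)^[k] x * (⇑D)^[n + 1 - k] y))]
          have h1 : (∑ k ∈ Finset.range (n + 1), n.choose k • ((⇑D)^[k] x * (⇑D)^[n - k + 1] y))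
              = ∑ k ∈ Finset.range (n + 1), n.choose k • ((⇑D)^[k] x * (⇑D)^[n + 1 - k] y) := by
            refine Finset.sum_congr rfl fun k hk => ?_
            rw [Finset.mem_range] at hk
            have : n - k + 1 = n + 1 - k := by omega
            rw [this]
          rw [h1]
          have h2 : (∑ k ∈ Finset.range (n + 1), n.choose k • ((⇑D)^[k] x * (⇑D)^[n + 1 - k] y))
              = (∑ k ∈ Finset.range n, n.choose (k + 1) • ((⇑D)^[k + 1] x * (⇑D)^[n - k] y))
                + (⇑D)^[0] x * (⇑D)^[n + 1] y := by
            rw [Finset.sum_range_succ' (fun k => n.choose k • ((⇑D)^[k] x * (⇑D)^[n + 1 - k] y))]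
            simp only [Nat.choose_zero_right, one_smul, Nat.sub_zero]
            congr 1
            refine Finset.sum_congr rfl fun k hk => ?_
            have e : n + 1 - (k + 1) = n - k := by omega
            rw [e]
          rw [h2]
          have h3 : (∑ k ∈ Finset.range (n + 1), n.choose k • ((⇑D)^[k + 1] x * (⇑D)^[n - k] y))
              = (∑ k ∈ Finset.range (n + 1),
                  ((n.choose k + n.choose (k + 1)) • ((⇑D)^[k + 1] x * (⇑D)^[n - k] y)))
                - ∑ k ∈ Finset.range n, n.choose (k + 1) • ((⇑D)^[k + 1] x * (⇑D)^[n - k] y) := by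
            have h3' : (∑ k ∈ Finset.range (n + 1),
                (n.choose k + n.choose (k + 1)) • ((⇑D)^[k + 1] x * (⇑D)^[n - k] y))
                  = ∑ k ∈ Finset.range (n + 1),
                    (n.choose k • ((⇑D)^[k + 1] x * (⇑D)^[n - k] y)
                      + n.choose (k + 1) • ((⇑D)^[k + 1] x * (⇑D)^[n - k] y)) :=
              Finset.sum_congr rfl fun k _ => add_smul _ _ _
            rw [eq_sub_iff_add_eq, h3', Finset.sum_add_distrib]
            congr 1
            rw [Finset.sum_range_succ]
            simp [Nat.choose_succ_self]
          rw [h3]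
          have h4 : (∑ k ∈ Finset.range (n + 1),
              (n.choose k + n.choose (k + 1)) • ((⇑D)^[k + 1] x * (⇑D)^[n - k] y))
                = ∑ k ∈ Finset.range (n + 1),
                  (n + 1).choose (k + 1) • ((⇑D)^[k + 1] x * (⇑D)^[n + 1 - (k + 1)] y) := by
            refine Finset.sum_congr rfl fun k hk => ?_
            have e : n + 1 - (k + 1) = n - k := by omega
            rw [Nat.choose_succ_succ, e]
          rw [h4]
          simp only [Nat.choose_zero_right, one_smul]
          abel

/-- A locally nilpotent derivation on a characteristic-zero domain kills units. -/
lemma unit_deriv_zero {K B : Type*} [CommRing K] [CommRing B] [IsDomain B] [CharZero B]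
    [Algebra K B] (D : Derivation K B B)
    (hln : ∀ x : B, ∃ n : ℕ, (⇑D)^[n] x = 0) {u : B} (hu : IsUnit u) : D u = 0 := by
  classical
  by_contra hDu
  obtain ⟨v, huv⟩ := hu.exists_right_inv
  have hexu := hln u
  have hexv := hln v
  set n := Nat.find hexu with hn
  set m := Nat.find hexv with hm
  have hnz : (⇑D)^[n] u = 0 := Nat.find_spec hexu
  have hmz : (⇑D)^[m] v = 0 := Nat.find_spec hexv
  have hn2 : 2 ≤ n := by
    by_contra h
    push_neg at h
    interval_cases n
    · have h0 : u = 0 := by simpa using hnz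
      exact hDu (by rw [h0, map_zero])
    · exact hDu (by simpa using hnz)
  have hm1 : 1 ≤ m := by
    rcases Nat.eq_zero_or_pos m with h | h
    · exfalso
      have h0 : v = 0 := by simpa [h] using hmz
      rw [h0, mul_zero] at huv
      exact one_ne_zero huv.symm
    · exact h
  set t := n - 1 + (m - 1) with ht
  have h1t : 1 ≤ t := by omega
  have hiter1 : (⇑D)^[t] (1 : B) = 0 := by
    have ht2 : t = (t - 1) + 1 := by omega
    rw [ht2, Function.iterate_add_apply, Function.iterate_one, Derivation.map_one_eq_zero]
    exact Function.iterate_fixed (map_zero D) _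
  have key := iter_leibniz D u v t
  rw [huv, hiter1] at key
  have hsingle : (∑ k ∈ Finset.range (t + 1), t.choose k • ((⇑D)^[k] u * (⇑D)^[t - k] v))
      = t.choose (n - 1) • ((⇑D)^[n - 1] u * (⇑D)^[t - (n - 1)] v) := by
    refine Finset.sum_eq_single_of_mem (n - 1) (Finset.mem_range.mpr (by omega)) ?_
    intro k hk hkne
    rw [Finset.mem_range] at hk
    rcases Nat.lt_or_ge k (n - 1) with h | h
    · have hz : (⇑D)^[t - k] v = 0 := by
        obtain ⟨j, hj⟩ : ∃ j, t - k = j + m := ⟨t - k - m, by omega⟩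
        rw [hj, Function.iterate_add_apply, hmz]
        exact Function.iterate_fixed (map_zero D) j
      rw [hz, mul_zero, smul_zero]
    · have hz : (⇑D)^[k] u = 0 := by
        obtain ⟨j, hj⟩ : ∃ j, k = j + n := ⟨k - n, by omega⟩
        rw [hj, Function.iterate_add_apply, hnz]
        exact Function.iterate_fixed (map_zero D) j
      rw [hz, zero_mul, smul_zero]
  rw [hsingle, nsmul_eq_mul] at key
  have hu' : (⇑D)^[n - 1] u ≠ 0 := Nat.find_min hexu (by omega)
  have hv' : (⇑D)^[t - (n - 1)] v ≠ 0 := by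
    have h0 : t - (n - 1) = m - 1 := by omega
    rw [h0]
    exact Nat.find_min hexv (by omega)
  have hc : ((t.choose (n - 1) : ℕ) : B) ≠ 0 :=
    Nat.cast_ne_zero.mpr (Nat.choose_pos (show n - 1 ≤ t by omega)).ne'
  rcases mul_eq_zero.mp key.symm with h | h
  · exact hc h
  · rcases mul_eq_zero.mp h with h' | h'
    · exact hu' h'
    · exact hv' h'

/-- If `A` is a finitely generated integral domain over `K`, `f ≠ 0`, and `D` is a
locally nilpotent derivation of the localization `A_f`, then for some `N` the
derivation `f^N • D` maps `A` into `A` and restricts to a locally nilpotent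
derivation of `A`. -/
theorem stmt11 {K A B : Type*} [Field K] [CharZero K] [CommRing A] [IsDomain A]
    [CommRing B] [Algebra K A] [Algebra K B] [Algebra A B] [IsScalarTower K A B]
    [Algebra.FiniteType K A]
    (f : A) (hf : f ≠ 0) (hloc : IsLocalization.Away f B)
    (D : Derivation K B B) (hln : ∀ x : B, ∃ n : ℕ, (⇑D)^[n] x = 0) :
    ∃ (N : ℕ) (D' : Derivation K A A),
      (∀ a : A, algebraMap A B (D' a) = algebraMap A B f ^ N * D (algebraMap A B a)) ∧
        (∀ a : A, ∃ k : ℕ, (⇑D')^[k] a = 0) := by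
  classical
  haveI := hloc
  have hfle : Submonoid.powers f ≤ nonZeroDivisors A :=
    powers_le_nonZeroDivisors_of_noZeroDivisors hf
  have inj : Function.Injective (algebraMap A B) := IsLocalization.injective B hfle
  haveI : IsDomain B := IsLocalization.isDomain_of_le_nonZeroDivisors B hfle
  haveI : CharZero B := charZero_of_injective_algebraMap (algebraMap K B).injective
  have hDf : D (algebraMap A B f) = 0 :=
    unit_deriv_zero D hln (IsLocalization.Away.algebraMap_isUnit f)
  obtain ⟨s, hs⟩ := Algebra.FiniteType.out (R := K) (A := A)
  choose nn aa haa using fun a : A => IsLocalization.Away.surj f (D (algebraMap A B a))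
  set N := s.sup nn with hN
  have key : ∀ a : A, ∃ a' : A,
      algebraMap A B a' = algebraMap A B f ^ N * D (algebraMap A B a) := by
    intro a
    have ha : a ∈ Algebra.adjoin K (s : Set A) := hs ▸ Algebra.mem_top
    induction ha using Algebra.adjoin_induction with
    | mem x hx =>
      have hxN : nn x ≤ N := Finset.le_sup hx
      refine ⟨f ^ (N - nn x) * aa x, ?_⟩
      have hpow : algebraMap A B f ^ (N - nn x) * algebraMap A B f ^ nn x
          = algebraMap A B f ^ N := by
        rw [← pow_add, Nat.sub_add_cancel hxN]
      calc algebraMap A B (f ^ (N - nn x) * aa x)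
          = algebraMap A B f ^ (N - nn x)
              * (D (algebraMap A B x) * algebraMap A B f ^ nn x) := by
            rw [map_mul, map_pow, ← haa x]
        _ = algebraMap A B f ^ N * D (algebraMap A B x) := by rw [← hpow]; ring
    | algebraMap r =>
      refine ⟨0, ?_⟩
      rw [map_zero, ← IsScalarTower.algebraMap_apply K A B, Derivation.map_algebraMap, mul_zero]
    | add x y hx hy ihx ihy =>
      obtain ⟨x', hx'⟩ := ihx
      obtain ⟨y', hy'⟩ := ihy
      exact ⟨x' + y', by rw [map_add, hx', hy', map_add, map_add, mul_add]⟩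
    | mul x y hx hy ihx ihy =>
      obtain ⟨x', hx'⟩ := ihx
      obtain ⟨y', hy'⟩ := ihy
      refine ⟨x * y' + y * x', ?_⟩
      simp only [map_add, map_mul, hx', hy', Derivation.leibniz, smul_eq_mul]
      ring
  choose g hg using key
  have gadd : ∀ a b : A, g (a + b) = g a + g b := by
    intro a b
    apply inj
    simp only [map_add, hg]
    ring
  have gsmul : ∀ (r : K) (a : A), g (r • a) = r • g a := by
    intro r a
    apply inj
    simp only [Algebra.smul_def, map_mul, ← IsScalarTower.algebraMap_apply K A B, hg,
      Derivation.leibniz, Derivation.map_algebraMap, smul_eq_mul, mul_zero, add_zero,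
      Algebra.algebraMap_self, RingHom.id_apply]
    ring
  have gleib : ∀ a b : A, g (a * b) = a • g b + b • g a := by
    intro a b
    apply inj
    simp only [map_add, map_mul, smul_eq_mul, hg, Derivation.leibniz]
    ring
  set L : A →ₗ[K] A := { toFun := g, map_add' := gadd, map_smul' := gsmul } with hL
  set D' : Derivation K A A := Derivation.mk' L gleib with hD'
  have hD'app : ∀ a : A, D' a = g a := fun a => rfl
  have iter : ∀ (k : ℕ) (a : A),
      algebraMap A B ((⇑D')^[k] a)
        = algebraMap A B f ^ (N * k) * (⇑D)^[k] (algebraMap A B a) := by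
    intro k
    induction k with
    | zero => intro a; simp
    | succ k ih =>
      intro a
      rw [Function.iterate_succ_apply', hD'app, hg, ih, Function.iterate_succ_apply']
      have hDfpow : D (algebraMap A B f ^ (N * k)) = 0 := by
        rw [Derivation.leibniz_pow, hDf]
        simp
      rw [Derivation.leibniz, hDfpow, smul_zero, add_zero, smul_eq_mul, ← mul_assoc, ← pow_add]
      congr 2
      ring
  refine ⟨N, D', fun a => by rw [hD'app, hg], ?_⟩
  intro a
  obtain ⟨k, hk⟩ := hln (algebraMap A B a)
  exact ⟨k, inj (by rw [iter, hk, mul_zero, map_zero])⟩
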